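/- Let Λ be a finitely generated abelian group. Then the automorphism group Aut(Λ) has bounded finite subgroups; that is, there exists a constant B, depending only on Λ, such that every finite subgroup of Aut(Λ) has order at most B. -/

import Mathlib

open Finset in
/-- Powers of `1 + 3A` again have the form `1 + 3A'`. -/
lemma pow_one_add_three_smul {n : Type*} [Fintype n] [DecidableEq n]
    (A : Matrix n n ℤ) (j : ℕ) :
    ∃ A' : Matrix n n ℤ, (1 + (3:ℤ) • A) ^ j = 1 + (3:ℤ) • A' := by
  induction j with
  | zero => exact ⟨0, by simp⟩
  | succ j ih =>
    obtain ⟨A', hA'⟩ := ih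
    refine ⟨A' + A + 3 • (A' * A), ?_⟩
    rw [pow_succ, hA']
    simp only [mul_add, add_mul, mul_one, one_mul, smul_mul_assoc, mul_smul_comm, smul_smul,
      smul_add]
    abel_nf

open Finset in
theorem binom_extract {n : Type*} [Fintype n] [DecidableEq n]
    (x : Matrix n n ℤ) (r : ℕ) (h : (1 + x)^(r+2) = 1) :
    (r+2) • x + ∑ i ∈ range (r+1), ((r+2).choose (i+2)) • x^(i+2) = 0 := by
  have hexp := Commute.add_pow (Commute.one_right x) (r+2)
  rw [add_comm x 1, h, sum_range_succ', sum_range_succ'] at hexp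
  simp only [one_pow, mul_one, ← nsmul_eq_mul', Nat.choose_zero_right, Nat.choose_one_right,
    pow_zero, pow_one, one_smul, zero_add] at hexp
  have h2 : (∑ i ∈ range (r+1), ((r+2).choose (i+2)) • x^(i+2) + (r+2) • x) + 1 = 1 := hexp.symm
  have h3 := add_right_cancel (h2.trans (zero_add (1 : Matrix n n ℤ)).symm)
  rw [add_comm] at h3
  exact h3

open Finset in
theorem mink_prime {n : Type*} [Fintype n] [DecidableEq n]
    (q : ℕ) (hq : q.Prime) (C : Matrix n n ℤ)
    (h : (1 + (3:ℤ) • C) ^ q = 1) : C = 0 := by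
  have key : ∀ s : ℕ, ∀ a b, (3:ℤ) ^ s ∣ C a b := by
    intro s
    induction s with
    | zero => intro a b; simp
    | succ s ihs =>
      intro a b
      set D : Matrix n n ℤ := Matrix.of fun a b => C a b / 3 ^ s with hD
      have hCD : ∀ a b, C a b = ((3:ℤ) ^ s) * D a b := by
        intro a b
        simp only [hD, Matrix.of_apply]
        exact (Int.mul_ediv_cancel' (ihs a b)).symm
      set t : ℤ := 3 ^ (s + 1) with ht
      have h3t : (3:ℤ) ∣ t := by rw [ht]; exact dvd_pow_self 3 (Nat.succ_ne_zero s)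
      have htne : t ≠ 0 := by positivity
      have hx : (3:ℤ) • C = t • D := by
        ext a b
        simp only [Matrix.smul_apply, smul_eq_mul, hCD a b, ht, pow_succ]
        ring
      obtain ⟨r, rfl⟩ : ∃ r, q = r + 2 := ⟨q - 2, by have := hq.two_le; omega⟩
      rw [hx] at h
      have H := binom_extract (t • D) r h
      have hE := congrFun (congrFun H a) b
      simp only [smul_pow] at hE
      simp only [Matrix.add_apply, Matrix.sum_apply, Matrix.smul_apply, Matrix.zero_apply] at hE
      simp only [smul_eq_mul, nsmul_eq_mul] at hE
      -- hE : ↑(r+2) * (t * D a b) + ∑ i, ↑choose * (t^(i+2) * D^(i+2) a b) = 0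
      have hDdvd : (3:ℤ) ∣ D a b := by
        by_cases hq3 : r + 2 = 3
        · -- q = 3 : need the finer estimate mod 3^(s+3)
          obtain rfl : r = 1 := by omega
          rw [Finset.sum_range_succ, Finset.sum_range_one] at hE
          norm_num at hE
          -- hE : 3 * (t * D a b) + (3 * (t^2 * (D^2) a b) + t^3 * (D^3) a b) = 0
          have e1 : (3:ℤ) ^ (s + 3) ∣ 3 * (t * D a b) := by
            have heq : (3:ℤ) * (t * D a b)
                = -(3 * (t ^ 2 * (D ^ 2) a b) + t ^ 3 * (D ^ 3) a b) := by linarith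
            rw [heq]
            refine dvd_neg.mpr (dvd_add ?_ ?_)
            · exact ⟨3 ^ s * (D ^ 2) a b, by rw [ht]; ring⟩
            · exact ⟨3 ^ (2 * s) * (D ^ 3) a b, by rw [ht]; ring⟩
          have e2 : (3:ℤ) ^ (s + 2) * 3 ∣ 3 ^ (s + 2) * D a b := by
            have h32 : (3:ℤ) * (t * D a b) = 3 ^ (s + 2) * D a b := by rw [ht]; ring
            have h33 : (3:ℤ) ^ (s + 3) = 3 ^ (s + 2) * 3 := by ring
            rw [← h32, ← h33]; exact e1
          exact (mul_dvd_mul_iff_left (a := (3:ℤ) ^ (s + 2)) (by positivity)).mp e2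
        · have hsum : ∀ i ∈ range (r+1),
              t * t ∣ (((r+2).choose (i+2) : ℤ)) * (t^(i+2) * ((D^(i+2)) a b)) := by
            intro i _
            have hdt : t * t ∣ t ^ (i + 2) := by
              rw [pow_add, pow_two]
              exact Dvd.dvd.mul_left dvd_rfl _
            exact (hdt.mul_right _).mul_left _
          have hdvd : t * t ∣ t * (((r+2 : ℕ) : ℤ) * D a b) := by
            have h1 : t * t ∣ ∑ i ∈ range (r+1),
                (((r+2).choose (i+2) : ℤ)) * (t^(i+2) * ((D^(i+2)) a b)) :=
              Finset.dvd_sum hsum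
            have h2 : t * (((r+2:ℕ)) * D a b) = -∑ i ∈ range (r+1),
                (((r+2).choose (i+2) : ℤ)) * (t^(i+2) * ((D^(i+2)) a b)) := by
              have := eq_neg_of_add_eq_zero_left hE
              rw [← this]; ring
            rw [h2]
            exact h1.neg_right
          have hqD : (3:ℤ) ∣ ((r+2 : ℕ) : ℤ) * D a b :=
            dvd_trans h3t ((mul_dvd_mul_iff_left htne).mp hdvd)
          have h3p : Prime (3:ℤ) := Int.prime_three
          rcases h3p.dvd_mul.mp hqD with h' | h'
          · exfalso
            have hnd : (3:ℕ) ∣ r + 2 := by exact_mod_cast h'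
            exact hq3 ((Nat.prime_dvd_prime_iff_eq Nat.prime_three hq).mp hnd).symm
          · exact h'
      rw [hCD a b, ht, pow_succ]
      exact mul_dvd_mul_left _ hDdvd
  ext a b
  simp only [Matrix.zero_apply]
  by_contra h0
  obtain ⟨s, hs⟩ : ∃ s, (C a b).natAbs < 3 ^ s :=
    ⟨(C a b).natAbs, Nat.lt_pow_self (by norm_num)⟩
  have hle : (3:ℤ) ^ s ≤ |C a b| :=
    Int.le_of_dvd (abs_pos.mpr h0) ((dvd_abs _ _).mpr (key s a b))
  rw [Int.abs_eq_natAbs] at hle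
  have : (3:ℤ) ^ s = ((3 ^ s : ℕ) : ℤ) := by push_cast; ring
  rw [this] at hle
  have := Int.ofNat_le.mp hle
  omega

/-- Minkowski's lemma: a matrix congruent to 1 mod 3 with `A ^ k = 1` equals `1`. -/
theorem mink_main {n : Type*} [Fintype n] [DecidableEq n]
    (k : ℕ) (hk : 0 < k) (C : Matrix n n ℤ)
    (h : (1 + (3:ℤ) • C) ^ k = 1) : C = 0 := by
  induction k using Nat.strong_induction_on generalizing C with
  | _ k ih =>
    rcases eq_or_ne k 1 with rfl | hk1
    · rw [pow_one] at h
      have h2 := add_left_cancel (h.trans (add_zero 1).symm)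
      rw [smul_eq_zero] at h2
      exact h2.resolve_left (by norm_num)
    by_cases hp : k.Prime
    · exact mink_prime k hp C h
    · set p := k.minFac with hpdef
      have hpp : p.Prime := Nat.minFac_prime hk1
      have hpdvd : p ∣ k := Nat.minFac_dvd k
      set m := k / p with hmdef
      have hkm : k = p * m := (Nat.mul_div_cancel' hpdvd).symm
      have hm1 : m ≠ 1 := by
        intro hm
        rw [hm, mul_one] at hkm
        exact hp (hkm ▸ hpp)
      have hmpos : 0 < m := Nat.div_pos (Nat.minFac_le hk) hpp.pos
      have hmlt : m < k := by
        have h2 : 2 ≤ p := hpp.two_le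
        calc m = k / p := hmdef
        _ ≤ k / 2 := Nat.div_le_div_left h2 (by norm_num)
        _ < k := Nat.div_lt_self hk (by norm_num)
      obtain ⟨C', hC'⟩ := pow_one_add_three_smul C p
      have hpow : (1 + (3:ℤ) • C') ^ m = 1 := by
        rw [← hC', ← pow_mul, ← hkm, h]
      have hC'0 := ih m hmlt hmpos C' hpow
      rw [hC'0, smul_zero, add_zero] at hC'
      exact mink_prime p hpp C hC'

section Core
variable {Λ : Type*} [AddCommGroup Λ] [Module.Finite ℤ Λ]

/-- Key step: a finite-order automorphism congruent to the identity
modulo `3c` (where `c` kills the torsion) is the identity. -/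
theorem core_lemma (c : ℕ) (hcpos : 0 < c)
    (hc : ∀ y : Λ, y ∈ Submodule.torsion ℤ Λ → (c : ℤ) • y = 0)
    (α : AddAut Λ) (hfo : IsOfFinAddOrder α)
    (hmod : ∀ x : Λ, ∃ y : Λ, α x - x = ((3 * c : ℕ) : ℤ) • y) :
    α = 0 := by
  classical
  set T : Submodule ℤ Λ := Submodule.torsion ℤ Λ with hT
  set F := Λ ⧸ T with hF
  haveI : Module.IsTorsionFree ℤ F := inferInstance
  haveI : Module.Free ℤ F := Module.free_of_finite_type_torsion_free'
  -- the induced endomorphism on F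
  have hcomap : ∀ f : Λ →ₗ[ℤ] Λ, T ≤ T.comap f := by
    intro f x hx
    obtain ⟨a, ha⟩ := hx
    refine ⟨a, ?_⟩
    show a • f x = 0
    rw [Submonoid.smul_def] at ha ⊢
    rw [← map_smul, ha, map_zero]
  set L : F →ₗ[ℤ] F := T.mapQ T α.toIntLinearEquiv.toLinearMap (hcomap _) with hL
  have hLmk : ∀ x : Λ, L (Submodule.Quotient.mk x) = Submodule.Quotient.mk (α x) := by
    intro x; rw [hL, Submodule.mapQ_apply]; rfl
  set k := addOrderOf α with hk
  have hkpos : 0 < k := hfo.addOrderOf_pos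
  have hαk : ∀ x : Λ, (k • α) x = x := by
    intro x; rw [addOrderOf_nsmul_eq_zero α]; rfl
  have hαpow : ∀ (j : ℕ) (x : Λ), (α.toIntLinearEquiv.toLinearMap ^ j) x = (j • α) x := by
    intro j
    induction j with
    | zero => intro x; rfl
    | succ j ih =>
      intro x
      rw [pow_succ, succ_nsmul, Module.End.mul_apply, AddAut.add_apply]
      exact ih (α x)
  have hLk : L ^ k = 1 := by
    have hmq := Submodule.mapQ_pow (p := T) (f := (α.toIntLinearEquiv : Λ →ₗ[ℤ] Λ))
      (hcomap _) k
    rw [hL, ← hmq]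
    apply LinearMap.ext
    intro v
    obtain ⟨x, rfl⟩ := Submodule.Quotient.mk_surjective T v
    rw [Submodule.mapQ_apply, hαpow k x, hαk x, Module.End.one_apply]
  -- choose a basis of F
  let b := Module.Free.chooseBasis ℤ F
  set M := LinearMap.toMatrix b b L with hM
  have hMk : M ^ k = 1 := by
    rw [hM, LinearMap.toMatrix_pow, hLk, LinearMap.toMatrix_one]
  -- the matrix of L - 1 is divisible by 3
  have hδ : ∀ v : F, ∃ w : F, L v - v = (3 : ℤ) • w := by
    intro v
    obtain ⟨x, rfl⟩ := Submodule.Quotient.mk_surjective T v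
    obtain ⟨y, hy⟩ := hmod x
    refine ⟨Submodule.Quotient.mk ((c : ℤ) • y), ?_⟩
    rw [hLmk, ← Submodule.Quotient.mk_sub, hy, ← Submodule.Quotient.mk_smul]
    push_cast
    rw [smul_smul]
  have hD3 : ∀ i j, (3:ℤ) ∣ (M - 1) i j := by
    intro i j
    have h1 : (M - 1) = LinearMap.toMatrix b b (L - 1) := by
      rw [map_sub, hM, LinearMap.toMatrix_one]
    obtain ⟨w, hw⟩ := hδ (b j)
    rw [h1, LinearMap.toMatrix_apply, LinearMap.sub_apply, Module.End.one_apply, hw, map_smul]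
    exact ⟨b.repr w i, rfl⟩
  set C : Matrix _ _ ℤ := Matrix.of fun i j => (M - 1) i j / 3 with hC
  have hMC : M = 1 + (3:ℤ) • C := by
    ext i j
    have h2 := Int.mul_ediv_cancel' (hD3 i j)
    have h3 : (M - 1) i j = M i j - (1 : Matrix _ _ ℤ) i j := by rw [Matrix.sub_apply]
    simp only [Matrix.add_apply, Matrix.smul_apply, hC, Matrix.of_apply, smul_eq_mul]
    omega
  have hC0 : C = 0 := mink_main k hkpos C (by rw [← hMC, hMk])
  have hM1 : M = 1 := by rw [hMC, hC0, smul_zero, add_zero]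
  have hL1 : L = 1 := by
    apply (LinearMap.toMatrix b b).injective
    rw [← hM, hM1, LinearMap.toMatrix_one]
  have htors : ∀ x : Λ, α x - x ∈ T := by
    intro x
    have h4 : Submodule.Quotient.mk (α x - x) = (0 : F) := by
      rw [Submodule.Quotient.mk_sub, ← hLmk, hL1, Module.End.one_apply, sub_self]
    exact (Submodule.Quotient.mk_eq_zero T).mp h4
  apply DFunLike.ext α 0
  intro x
  show α x = x
  obtain ⟨y, hy⟩ := hmod x
  have hyT : y ∈ T := by
    have h1 : ((3*c:ℕ):ℤ) • y ∈ T := hy ▸ htors x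
    have h2 : ((3*c:ℕ):ℤ) • (Submodule.Quotient.mk y : F) = 0 := by
      rw [← Submodule.Quotient.mk_smul, Submodule.Quotient.mk_eq_zero]
      exact h1
    have h3 : ((3*c:ℕ):ℤ) ≠ 0 := by
      have : 0 < 3 * c := by omega
      exact_mod_cast this.ne'
    have h5 := (smul_eq_zero.mp h2).resolve_left h3
    rwa [Submodule.Quotient.mk_eq_zero] at h5
  have h6 : α x - x = 0 := by
    rw [hy, show ((3*c:ℕ):ℤ) = 3 * (c:ℤ) by push_cast; ring, mul_smul, hc y hyT, smul_zero]
  have := sub_eq_zero.mp h6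
  exact this
end Core



/-- The automorphism group of a finitely generated abelian group has bounded finite
subgroups. -/
theorem aut_fg_abelian_bounded_finite_subgroups
    (Λ : Type*) [AddCommGroup Λ] [AddGroup.FG Λ] :
    ∃ B : ℕ, ∀ G : AddSubgroup (AddAut Λ), Finite G → Nat.card G ≤ B := by
  classical
  haveI hfin : Module.Finite ℤ Λ := Module.Finite.iff_addGroup_fg.mpr ‹_›
  set T : Submodule ℤ Λ := Submodule.torsion ℤ Λ with hT
  haveI : IsNoetherian ℤ Λ := isNoetherian_of_isNoetherianRing_of_finite ℤ Λ
  haveI : Module.Finite ℤ T := Module.Finite.iff_fg.mpr (IsNoetherian.noetherian T)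
  have hTtor : Module.IsTorsion ℤ T := by
    rintro ⟨x, hx⟩
    obtain ⟨a, ha⟩ := hx
    refine ⟨a, ?_⟩
    rw [Submonoid.smul_def] at ha ⊢
    ext
    simpa using ha
  haveI hTfin : Finite T := Module.finite_of_fg_torsion T hTtor
  set c := Nat.card T with hc
  have hcpos : 0 < c := Nat.card_pos
  set m : ℕ := 3 * c with hm
  have hmpos : 0 < m := by omega
  set N : Submodule ℤ Λ := LinearMap.range ((m : ℤ) • LinearMap.id : Λ →ₗ[ℤ] Λ) with hN
  have hNmem : ∀ x : Λ, x ∈ N ↔ ∃ y : Λ, (m : ℤ) • y = x := by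
    intro x
    rw [hN, LinearMap.mem_range]
    constructor
    · rintro ⟨y, hy⟩; exact ⟨y, by simpa using hy⟩
    · rintro ⟨y, hy⟩; exact ⟨y, by simpa using hy⟩
  set Q := Λ ⧸ N with hQ
  haveI : Module.Finite ℤ Q :=
    Module.Finite.of_surjective N.mkQ (Submodule.Quotient.mk_surjective N)
  have hQtor : Module.IsTorsion ℤ Q := by
    intro q
    obtain ⟨x, rfl⟩ := Submodule.Quotient.mk_surjective N q
    refine ⟨⟨(m : ℤ), mem_nonZeroDivisors_of_ne_zero (by exact_mod_cast hmpos.ne')⟩, ?_⟩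
    rw [Submonoid.smul_def]
    show (m : ℤ) • (Submodule.Quotient.mk x : Q) = 0
    rw [← Submodule.Quotient.mk_smul, Submodule.Quotient.mk_eq_zero]
    exact (hNmem _).mpr ⟨x, rfl⟩
  haveI hQfin : Finite Q := Module.finite_of_fg_torsion Q hQtor
  haveI : Finite (AddAut Q) :=
    Finite.of_injective (fun e : AddAut Q => (e : Q → Q)) DFunLike.coe_injective
  have hNmap : ∀ e : Λ ≃ₗ[ℤ] Λ, N.map (e : Λ →ₗ[ℤ] Λ) = N := by
    intro e
    apply le_antisymm
    · rintro x hx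
      obtain ⟨y, hy, rfl⟩ := Submodule.mem_map.mp hx
      obtain ⟨z, rfl⟩ := (hNmem y).mp hy
      exact (hNmem _).mpr ⟨e z, by rw [map_smul]; rfl⟩
    · intro x hx
      obtain ⟨z, rfl⟩ := (hNmem x).mp hx
      refine Submodule.mem_map.mpr ⟨(m : ℤ) • e.symm z, (hNmem _).mpr ⟨e.symm z, rfl⟩, ?_⟩
      rw [map_smul]
      show (m : ℤ) • e (e.symm z) = (m : ℤ) • z
      rw [e.apply_symm_apply]
  have hez : ∀ (e : Λ ≃ₗ[ℤ] Λ) (z : Λ), (e : Λ →ₗ[ℤ] Λ) z = e z := fun _ _ => rfl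
  let Φ : AddAut Λ → AddAut Q :=
    fun α => (Submodule.Quotient.equiv N N α.toIntLinearEquiv (hNmap _)).toAddEquiv
  have hΦ : ∀ (α : AddAut Λ) (x : Λ),
      Φ α (Submodule.Quotient.mk x) = Submodule.Quotient.mk (α x) := by
    intro α x
    show (Submodule.Quotient.equiv N N α.toIntLinearEquiv (hNmap _))
      (Submodule.Quotient.mk x) = _
    rw [Submodule.Quotient.equiv_apply, Submodule.mapQ_apply]
    rfl
  let π : AddAut Λ →+ AddAut Q := {
    toFun := Φ
    map_zero' := by
      apply DFunLike.ext
      intro q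
      obtain ⟨x, rfl⟩ := Submodule.Quotient.mk_surjective N q
      exact hΦ 0 x
    map_add' := by
      intro α β
      apply DFunLike.ext
      intro q
      obtain ⟨x, rfl⟩ := Submodule.Quotient.mk_surjective N q
      show Φ (α + β) (Submodule.Quotient.mk x) = (Φ α) ((Φ β) (Submodule.Quotient.mk x))
      rw [hΦ, hΦ, hΦ, AddAut.add_apply] }
  have hπmk : ∀ (α : AddAut Λ) (x : Λ),
      π α (Submodule.Quotient.mk x) = Submodule.Quotient.mk (α x) := hΦ
  refine ⟨Nat.card (AddAut Q), ?_⟩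
  intro G hG
  set φ : G →+ AddAut Q := π.comp G.subtype with hφdef
  have hφ : Function.Injective φ := by
    rw [injective_iff_map_eq_zero]
    intro a ha
    have hfo : IsOfFinAddOrder (a : AddAut Λ) :=
      G.subtype.isOfFinAddOrder (isOfFinAddOrder_of_finite a)
    have hmod : ∀ x : Λ, ∃ y : Λ, (a : AddAut Λ) x - x = ((3 * c : ℕ) : ℤ) • y := by
      intro x
      have h1 : π (a : AddAut Λ) (Submodule.Quotient.mk x) = Submodule.Quotient.mk x := by
        have : φ a = 0 := ha
        rw [hφdef] at this
        calc π (a : AddAut Λ) (Submodule.Quotient.mk x)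
            = (φ a) (Submodule.Quotient.mk x) := rfl
          _ = Submodule.Quotient.mk x := by rw [this]; rfl
      rw [hπmk] at h1
      have h2 : (a : AddAut Λ) x - x ∈ N := by
        rw [← Submodule.Quotient.mk_eq_zero, Submodule.Quotient.mk_sub, h1, sub_self]
      obtain ⟨y, hy⟩ := (hNmem _).mp h2
      exact ⟨y, hy.symm⟩
    have hc' : ∀ y : Λ, y ∈ Submodule.torsion ℤ Λ → (c : ℤ) • y = 0 := by
      intro y hy
      have h3 : c • (⟨y, hy⟩ : T) = 0 := card_nsmul_eq_zero'
      have h4 : c • y = 0 := by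
        have := congrArg (Subtype.val) h3
        simpa using this
      rw [natCast_zsmul]
      exact h4
    have := core_lemma c hcpos hc' (a : AddAut Λ) hfo hmod
    exact Subtype.ext this
  exact Nat.card_le_card_of_injective φ hφ
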